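/- For every integer s ≥ 1: Σ_{i=0}^{s} (-1)ⁱ p_{s-i}(Z) = ∏_{d | 2s+1, d ≠ 1} q_d*(Z), where p_n is the trace polynomial family, q_d is determined by the cyclotomic polynomial relation g_d(X) = X^{φ(d)/2} q_d(X + 1/X), and * is the involution g*(T) = (-1)^{deg g} g(-T). -/

import Mathlib

open Polynomial

noncomputable def tracePoly : ℕ → Polynomial ℂ
  | 0 => 1
  | 1 => X
  | 2 => X ^ 2 - 2
  | (n + 3) => X * tracePoly (n + 2) - tracePoly (n + 1)

/-- The involution `g* (T) = (-1)^(deg g) * g (-T)`. -/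
noncomputable def starPoly (g : Polynomial ℂ) : Polynomial ℂ :=
  (-1 : Polynomial ℂ) ^ g.natDegree * g.comp (-X)

lemma ne_zero_infinite : ({x : ℂ | x ≠ 0}).Infinite := by
  have : ({x : ℂ | x ≠ 0}) = ({0} : Set ℂ)ᶜ := by ext x; simp
  rw [this]
  exact (Set.finite_singleton 0).infinite_compl

lemma ne_neg_two_infinite : ({w : ℂ | w ≠ -2}).Infinite := by
  have : ({w : ℂ | w ≠ -2}) = ({-2} : Set ℂ)ᶜ := by ext x; simp
  rw [this]
  exact (Set.finite_singleton (-2)).infinite_compl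


lemma tracePoly_eval (z : ℂ) (hz : z ≠ 0) :
    ∀ n : ℕ, (tracePoly (n+1)).eval (z + z⁻¹) = z ^ (n+1) + (z⁻¹) ^ (n+1) := by
  intro n
  induction n using Nat.strong_induction_on with
  | _ n ih =>
    match n with
    | 0 => simp [tracePoly]
    | 1 =>
      show (tracePoly 2).eval _ = _
      simp only [tracePoly, eval_sub, eval_pow, eval_X, eval_ofNat]
      linear_combination 2 * mul_inv_cancel₀ hz
    | (k+2) =>
      have h1 := ih (k+1) (by omega)
      have h0 := ih k (by omega)
      show (tracePoly (k+3)).eval _ = _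
      simp only [tracePoly, eval_sub, eval_mul, eval_X, h1, h0]
      linear_combination (z ^ (k+1) + z⁻¹ ^ (k+1)) * mul_inv_cancel₀ hz

lemma sum_eval (z : ℂ) (hz : z ≠ 0) (s : ℕ) :
    (∑ i ∈ Finset.range (s + 1), (-1 : Polynomial ℂ) ^ i * tracePoly (s - i)).eval (z + z⁻¹)
      * (z ^ s * (z + 1)) = z ^ (2 * s + 1) + 1 := by
  induction s with
  | zero => simp [tracePoly]
  | succ s ih =>
    rw [Finset.sum_range_succ']
    have hshift : ∀ i ∈ Finset.range (s+1),
        (-1 : Polynomial ℂ) ^ (i+1) * tracePoly (s+1-(i+1))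
        = -((-1 : Polynomial ℂ) ^ i * tracePoly (s-i)) := by
      intro i _
      have h : s+1-(i+1) = s-i := by omega
      rw [h]; ring
    rw [Finset.sum_congr rfl hshift, Finset.sum_neg_distrib]
    have hp := tracePoly_eval z hz s
    have key : z ^ (s+1) * (z⁻¹) ^ (s+1) = 1 := by
      rw [← mul_pow, mul_inv_cancel₀ hz, one_pow]
    simp only [Nat.sub_zero, eval_add, eval_neg, eval_mul, eval_pow, eval_one, pow_zero, one_mul]
    rw [hp]
    linear_combination (z+1) * key - z * ih

lemma q_natDegree (q : Polynomial ℂ) (d : ℕ) (hd : 3 ≤ d)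
    (h : ∀ x : ℂ, x ≠ 0 →
      (cyclotomic d ℂ).eval x = x ^ (Nat.totient d / 2) * q.eval (x + x⁻¹)) :
    q.natDegree = Nat.totient d / 2 := by
  set m := Nat.totient d / 2 with hm
  have heven : 2 * m = Nat.totient d := by
    obtain ⟨r, hr⟩ := Nat.totient_even (show 2 < d by omega)
    omega
  set n := q.natDegree with hn
  have hq0 : q ≠ 0 := by
    intro h0
    have : cyclotomic d ℂ = 0 := by
      apply Polynomial.eq_of_infinite_eval_eq
      apply ne_zero_infinite.mono
      intro x hx
      simp only [Set.mem_setOf_eq] at hx ⊢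
      rw [h x hx, h0]
      simp
    exact cyclotomic_ne_zero d ℂ this
  set R : Polynomial ℂ :=
    ∑ k ∈ Finset.range (n+1), C (q.coeff k) * X ^ (n-k) * (X^2+1)^k with hR
  have hReval : ∀ x : ℂ, x ≠ 0 → R.eval x = x ^ n * q.eval (x + x⁻¹) := by
    intro x hx
    rw [hR, Polynomial.eval_finset_sum]
    rw [Polynomial.eval_eq_sum_range, Finset.mul_sum]
    apply Finset.sum_congr rfl
    intro k hk
    have hk' : k ≤ n := by simpa using Nat.lt_succ_iff.mp (Finset.mem_range.mp hk)
    have hx2 : x + x⁻¹ = (x^2+1)/x := by field_simp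
    simp only [eval_mul, eval_pow, eval_add, eval_C, eval_X, eval_one]
    rw [hx2, div_pow, ← Nat.sub_add_cancel hk', pow_add, Nat.add_sub_cancel]
    field_simp
  have hterm_deg : ∀ k, k ≤ n →
      (C (q.coeff k) * X ^ (n-k) * (X^2+1)^k).natDegree ≤ n + k := by
    intro k hk
    calc (C (q.coeff k) * X ^ (n-k) * (X^2+1)^k).natDegree
        ≤ (C (q.coeff k) * X ^ (n-k)).natDegree + ((X^2+1 : Polynomial ℂ)^k).natDegree :=
          natDegree_mul_le
      _ ≤ (n - k) + k * 2 := by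
          gcongr
          · exact (natDegree_C_mul_le _ _).trans (by simp)
          · have h2 : (X^2+1 : Polynomial ℂ).natDegree = 2 := by
              simpa using natDegree_X_pow_add_C (n := 2) (r := (1:ℂ))
            calc ((X^2+1 : Polynomial ℂ)^k).natDegree
                ≤ k * (X^2+1 : Polynomial ℂ).natDegree := natDegree_pow_le
              _ = k * 2 := by rw [h2]
      _ ≤ n + k := by omega
  have hmonic : ((X^2+1 : Polynomial ℂ)^n).Monic := by
    have : (X^2+1 : Polynomial ℂ).Monic := by
      simpa using monic_X_pow_add_C (1:ℂ) (two_ne_zero)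
    exact this.pow n
  have hmonicdeg : ((X^2+1 : Polynomial ℂ)^n).natDegree = 2*n := by
    have h2 : (X^2+1 : Polynomial ℂ).natDegree = 2 := by
      simpa using natDegree_X_pow_add_C (n := 2) (r := (1:ℂ))
    have : (X^2+1 : Polynomial ℂ).Monic := by
      simpa using monic_X_pow_add_C (1:ℂ) (two_ne_zero)
    rw [this.natDegree_pow, h2]; ring
  have hcoeff : R.coeff (2*n) = q.leadingCoeff := by
    rw [hR, Polynomial.finset_sum_coeff, Finset.sum_range_succ]
    have hzero : ∀ k ∈ Finset.range n,
        (C (q.coeff k) * X ^ (n-k) * (X^2+1)^k).coeff (2*n) = 0 := by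
      intro k hk
      have hk' := Finset.mem_range.mp hk
      apply coeff_eq_zero_of_natDegree_lt
      exact lt_of_le_of_lt (hterm_deg k (le_of_lt hk')) (by omega)
    rw [Finset.sum_congr rfl hzero, Finset.sum_const, smul_zero, zero_add]
    simp only [Nat.sub_self, pow_zero, mul_one]
    rw [coeff_C_mul]
    have : ((X^2+1 : Polynomial ℂ)^n).coeff (2*n) = 1 := by
      rw [← hmonicdeg]; exact hmonic
    rw [this, mul_one, leadingCoeff]
  have hlc : q.leadingCoeff ≠ 0 := leadingCoeff_ne_zero.mpr hq0
  have hRdeg_le : R.natDegree ≤ 2*n := by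
    rw [hR]
    apply Polynomial.natDegree_sum_le_of_forall_le
    intro k hk
    have hk' : k ≤ n := Nat.lt_succ_iff.mp (Finset.mem_range.mp hk)
    exact (hterm_deg k hk').trans (by omega)
  have hRdeg : R.natDegree = 2*n := by
    apply le_antisymm hRdeg_le
    apply le_natDegree_of_ne_zero
    rw [hcoeff]; exact hlc
  have hR0 : R ≠ 0 := by
    intro h0
    rw [h0] at hcoeff
    simp at hcoeff
    exact hlc hcoeff.symm
  have hpoly : (X : Polynomial ℂ)^m * R = X^n * cyclotomic d ℂ := by
    apply Polynomial.eq_of_infinite_eval_eq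
    apply ne_zero_infinite.mono
    intro x hx
    simp only [Set.mem_setOf_eq] at hx ⊢
    simp only [eval_mul, eval_pow, eval_X]
    rw [hReval x hx, h x hx]
    ring
  have hdegeq : m + 2*n = n + Nat.totient d := by
    have h1 : ((X : Polynomial ℂ)^m * R).natDegree = m + 2*n := by
      rw [natDegree_mul (pow_ne_zero m X_ne_zero) hR0, natDegree_X_pow, hRdeg]
    have h2 : ((X : Polynomial ℂ)^n * cyclotomic d ℂ).natDegree = n + Nat.totient d := by
      rw [natDegree_mul (pow_ne_zero n X_ne_zero) (cyclotomic_ne_zero d ℂ), natDegree_X_pow,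
        natDegree_cyclotomic]
    rw [← h1, ← h2, hpoly]
  omega

lemma factor_eval (q : Polynomial ℂ) (d : ℕ) (hd : 3 ≤ d)
    (h : ∀ x : ℂ, x ≠ 0 →
      (cyclotomic d ℂ).eval x = x ^ (Nat.totient d / 2) * q.eval (x + x⁻¹))
    (hdeg : q.natDegree = Nat.totient d / 2) (z : ℂ) (hz : z ≠ 0) :
    (starPoly q).eval (z + z⁻¹) * z ^ (Nat.totient d / 2) = (cyclotomic d ℂ).eval (-z) := by
  have h2 := h (-z) (neg_ne_zero.mpr hz)
  have hnegw : -z + (-z)⁻¹ = -(z + z⁻¹) := by rw [inv_neg]; ring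
  rw [hnegw] at h2
  rw [h2]
  simp only [starPoly, eval_mul, eval_pow, eval_neg, eval_one, eval_comp, eval_X, hdeg]
  rw [neg_pow z]
  ring

theorem stmt14 (q : ℕ → Polynomial ℂ) (hq1 : q 1 = X - 2) (hq2 : q 2 = X + 2)
    (hq : ∀ d : ℕ, 3 ≤ d → ∀ x : ℂ, x ≠ 0 →
      (Polynomial.cyclotomic d ℂ).eval x = x ^ (Nat.totient d / 2) * (q d).eval (x + x⁻¹))
    (s : ℕ) (hs : 1 ≤ s) :
    (∑ i ∈ Finset.range (s + 1), (-1 : Polynomial ℂ) ^ i * tracePoly (s - i)) =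
      ∏ d ∈ (2 * s + 1).divisors.erase 1, starPoly (q d) := by
  have hn0 : (2*s+1 : ℕ) ≠ 0 := by omega
  set E := (2*s+1).divisors.erase 1 with hE
  have hmem : ∀ d ∈ E, 3 ≤ d ∧ d ∣ 2*s+1 := by
    intro d hd
    obtain ⟨hd1, hd2⟩ := Finset.mem_erase.mp hd
    obtain ⟨hdvd, -⟩ := Nat.mem_divisors.mp hd2
    refine ⟨?_, hdvd⟩
    have hdne0 : d ≠ 0 := by rintro rfl; exact hn0 (Nat.eq_zero_of_zero_dvd hdvd)
    have hdne2 : d ≠ 2 := by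
      rintro rfl
      omega
    omega
  have hdeg : ∀ d ∈ E, (q d).natDegree = Nat.totient d / 2 := fun d hd =>
    q_natDegree (q d) d (hmem d hd).1 (hq d (hmem d hd).1)
  -- sum of half-totients
  have h1mem : 1 ∈ (2*s+1).divisors := Nat.one_mem_divisors.mpr hn0
  have htotsum : ∑ d ∈ E, Nat.totient d / 2 = s := by
    have h1 : ∑ d ∈ (2*s+1).divisors, Nat.totient d = 2*s+1 := Nat.sum_totient _
    rw [← Finset.add_sum_erase _ _ h1mem] at h1
    simp only [Nat.totient_one] at h1
    rw [← hE] at h1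
    have h2 : ∑ d ∈ E, Nat.totient d = 2*s := by omega
    have h3 : ∑ d ∈ E, 2 * (Nat.totient d / 2) = ∑ d ∈ E, Nat.totient d := by
      apply Finset.sum_congr rfl
      intro d hd
      obtain ⟨r, hr⟩ := Nat.totient_even (show 2 < d by have := (hmem d hd).1; omega)
      omega
    rw [← Finset.mul_sum] at h3
    omega
  apply Polynomial.eq_of_infinite_eval_eq
  apply ne_neg_two_infinite.mono
  intro w hw
  simp only [Set.mem_setOf_eq] at hw ⊢
  -- find z with z + z⁻¹ = w
  have hdegq : (X^2 - C w * X + 1 : Polynomial ℂ).degree = 2 := by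
    compute_degree!
  obtain ⟨z, hzr⟩ := Complex.exists_root (f := X^2 - C w * X + 1) (by rw [hdegq]; norm_num)
  have hzr' : z^2 - w*z + 1 = 0 := by simpa [IsRoot] using hzr
  have hz0 : z ≠ 0 := by rintro rfl; simp at hzr'
  have hzw : z + z⁻¹ = w := by field_simp; linear_combination hzr'
  have hzm1 : z ≠ -1 := by
    rintro rfl
    apply hw
    rw [← hzw]
    norm_num
  have hz1ne : z + 1 ≠ 0 := by
    intro h; exact hzm1 (by linear_combination h)
  rw [← hzw]
  -- RHS evaluation
  have hfac : ∀ d ∈ E, (starPoly (q d)).eval (z + z⁻¹) * z ^ (Nat.totient d / 2)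
      = (cyclotomic d ℂ).eval (-z) := fun d hd =>
    factor_eval (q d) d (hmem d hd).1 (hq d (hmem d hd).1) (hdeg d hd) z hz0
  have hprodall : ∏ d ∈ (2*s+1).divisors, (cyclotomic d ℂ).eval (-z)
      = (-z)^(2*s+1) - 1 := by
    have := Polynomial.prod_cyclotomic_eq_X_pow_sub_one (show 0 < 2*s+1 by omega) ℂ
    have h2 := congrArg (Polynomial.eval (-z)) this
    simpa [eval_prod] using h2
  have hsplit : (cyclotomic 1 ℂ).eval (-z) * ∏ d ∈ E, (cyclotomic d ℂ).eval (-z)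
      = (-z)^(2*s+1) - 1 := by
    rw [← hprodall, ← Finset.mul_prod_erase _ _ h1mem]
  rw [cyclotomic_one] at hsplit
  simp only [eval_sub, eval_X, eval_one] at hsplit
  rw [eval_prod]
  have hA := sum_eval z hz0 s
  have hBz : (∏ d ∈ E, (starPoly (q d)).eval (z + z⁻¹)) * z ^ s
      = ∏ d ∈ E, (cyclotomic d ℂ).eval (-z) := by
    calc (∏ d ∈ E, (starPoly (q d)).eval (z + z⁻¹)) * z ^ s
        = (∏ d ∈ E, (starPoly (q d)).eval (z + z⁻¹)) * ∏ d ∈ E, z ^ (Nat.totient d / 2) := by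
          rw [Finset.prod_pow_eq_pow_sum, htotsum]
      _ = ∏ d ∈ E, ((starPoly (q d)).eval (z + z⁻¹) * z ^ (Nat.totient d / 2)) := by
          rw [Finset.prod_mul_distrib]
      _ = _ := Finset.prod_congr rfl hfac
  have hodd : Odd (2*s+1) := ⟨s, by ring⟩
  have hnegpow : (-z : ℂ)^(2*s+1) = -(z^(2*s+1)) := hodd.neg_pow z
  rw [hnegpow] at hsplit
  have hB : (∏ d ∈ E, (starPoly (q d)).eval (z + z⁻¹)) * (z ^ s * (z + 1))
      = z^(2*s+1) + 1 := by
    linear_combination (z+1) * hBz - hsplit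
  have hne : z^s * (z+1) ≠ 0 := mul_ne_zero (pow_ne_zero s hz0) hz1ne
  exact mul_right_cancel₀ hne (hA.trans hB.symm)
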